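/- Let s₄ ≈ 1.907 be the unique root in the interval (1,2) of s⁴ − 2s³ + 2s² − 4s + 1 = 0. Fix a real s with s₄ ≤ s ≤ 2 and consider the instance of the favorite-machine scheduling game on two machines with parameter s consisting of four jobs (of nonnegative size): A of size 1/2 with favorite machine 2; B of size 1/2 with favorite machine 1; C of size 1/2 with favorite machine 1; and E of size (2 − s)/2 with favorite machine 2. Then the allocation assigning A and C to machine 1 and B and E to machine 2 is a strong equilibrium whose makespan equals (s + 1)/2, while the optimal makespan of this instance is at most 1. Consequently, the strong price of anarchy at parameter s is at least (s + 1)/2. -/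
import Mathlib


open Finset

/-- Processing time of job `j` on machine `i` in the favorite-machine model:
`q j` on the favorite machine `f j` and `s * q j` on the other machine. -/
noncomputable def ptime (s : ℝ) {n : ℕ} (q : Fin n → ℝ) (f : Fin n → Fin 2)
    (i : Fin 2) (j : Fin n) : ℝ :=
  if f j = i then q j else s * q j

/-- Load of machine `i` under allocation `x`. -/
noncomputable def load (s : ℝ) {n : ℕ} (q : Fin n → ℝ) (f : Fin n → Fin 2)
    (x : Fin n → Fin 2) (i : Fin 2) : ℝ :=
  ∑ j ∈ Finset.univ.filter (fun j => x j = i), ptime s q f i j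

/-- Makespan (maximum load) of allocation `x`. -/
noncomputable def makespan (s : ℝ) {n : ℕ} (q : Fin n → ℝ) (f : Fin n → Fin 2)
    (x : Fin n → Fin 2) : ℝ :=
  max (load s q f x 0) (load s q f x 1)

/-- The optimal (minimum) makespan over all allocations. -/
noncomputable def optMakespan (s : ℝ) {n : ℕ} (q : Fin n → ℝ) (f : Fin n → Fin 2) : ℝ :=
  ⨅ y : Fin n → Fin 2, makespan s q f y

/-- Pure Nash equilibrium: no job can move to the other machine and find there
a load smaller than its current cost. -/
def IsNE (s : ℝ) {n : ℕ} (q : Fin n → ℝ) (f : Fin n → Fin 2)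
    (x : Fin n → Fin 2) : Prop :=
  ∀ j : Fin n, ∀ i : Fin 2, i ≠ x j →
    load s q f x (x j) ≤ load s q f (Function.update x j i) i

/-- Strong equilibrium: for every deviation `y` differing from `x` on a nonempty
set of jobs, some deviating job does not improve its cost. -/
def IsSE (s : ℝ) {n : ℕ} (q : Fin n → ℝ) (f : Fin n → Fin 2)
    (x : Fin n → Fin 2) : Prop :=
  ∀ y : Fin n → Fin 2, (∃ j, y j ≠ x j) →
    ∃ j, y j ≠ x j ∧ load s q f x (x j) ≤ load s q f y (y j)

lemma fin2 (a : Fin 2) : a = 0 ∨ a = 1 := by omega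

lemma load_eq (s : ℝ) (q : Fin 4 → ℝ) (f : Fin 4 → Fin 2) (x : Fin 4 → Fin 2) (i : Fin 2) :
    load s q f x i = ∑ j : Fin 4, if x j = i then ptime s q f i j else 0 := by
  rw [load, Finset.sum_filter]

lemma se_aux (s : ℝ) (hs1 : 1 ≤ s) (hs' : s ≤ 2)
    (q : Fin 4 → ℝ) (hq : q = ![1/2, 1/2, 1/2, (2 - s)/2])
    (f : Fin 4 → Fin 2) (hf : f = ![1, 0, 0, 1])
    (x : Fin 4 → Fin 2) (hx : x = ![0, 1, 0, 1])
    (y : Fin 4 → Fin 2) (hy : ∃ j, y j ≠ x j) :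
    ∃ j, y j ≠ x j ∧ load s q f x (x j) ≤ load s q f y (y j) := by
  rcases fin2 (y 0) with h0|h0 <;> rcases fin2 (y 1) with h1|h1 <;>
    rcases fin2 (y 2) with h2|h2 <;> rcases fin2 (y 3) with h3|h3
  · refine ⟨1, by simp [hx, h1], ?_⟩
    simp [load_eq, Fin.sum_univ_four, hx, hq, hf, ptime, h0, h1, h2, h3]
    nlinarith [hs1, hs']
  · refine ⟨1, by simp [hx, h1], ?_⟩
    simp [load_eq, Fin.sum_univ_four, hx, hq, hf, ptime, h0, h1, h2, h3]
    nlinarith [hs1, hs']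
  · refine ⟨1, by simp [hx, h1], ?_⟩
    simp [load_eq, Fin.sum_univ_four, hx, hq, hf, ptime, h0, h1, h2, h3]
    nlinarith [hs1, hs']
  · refine ⟨1, by simp [hx, h1], ?_⟩
    simp [load_eq, Fin.sum_univ_four, hx, hq, hf, ptime, h0, h1, h2, h3]
    nlinarith [hs1, hs']
  · refine ⟨3, by simp [hx, h3], ?_⟩
    simp [load_eq, Fin.sum_univ_four, hx, hq, hf, ptime, h0, h1, h2, h3]
    nlinarith [hs1, hs']
  · obtain ⟨j, hj⟩ := hy
    exfalso; apply hj
    fin_cases j <;> simp [hx, h0, h1, h2, h3]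
  · refine ⟨2, by simp [hx, h2], ?_⟩
    simp [load_eq, Fin.sum_univ_four, hx, hq, hf, ptime, h0, h1, h2, h3]
    nlinarith [hs1, hs']
  · refine ⟨2, by simp [hx, h2], ?_⟩
    simp [load_eq, Fin.sum_univ_four, hx, hq, hf, ptime, h0, h1, h2, h3]
    nlinarith [hs1, hs']
  · refine ⟨1, by simp [hx, h1], ?_⟩
    simp [load_eq, Fin.sum_univ_four, hx, hq, hf, ptime, h0, h1, h2, h3]
    nlinarith [hs1, hs']
  · refine ⟨1, by simp [hx, h1], ?_⟩
    simp [load_eq, Fin.sum_univ_four, hx, hq, hf, ptime, h0, h1, h2, h3]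
    nlinarith [hs1, hs']
  · refine ⟨0, by simp [hx, h0], ?_⟩
    simp [load_eq, Fin.sum_univ_four, hx, hq, hf, ptime, h0, h1, h2, h3]
    nlinarith [hs1, hs']
  · refine ⟨0, by simp [hx, h0], ?_⟩
    simp [load_eq, Fin.sum_univ_four, hx, hq, hf, ptime, h0, h1, h2, h3]
    nlinarith [hs1, hs']
  · refine ⟨0, by simp [hx, h0], ?_⟩
    simp [load_eq, Fin.sum_univ_four, hx, hq, hf, ptime, h0, h1, h2, h3]
    nlinarith [hs1, hs']
  · refine ⟨0, by simp [hx, h0], ?_⟩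
    simp [load_eq, Fin.sum_univ_four, hx, hq, hf, ptime, h0, h1, h2, h3]
    nlinarith [hs1, hs']
  · refine ⟨0, by simp [hx, h0], ?_⟩
    simp [load_eq, Fin.sum_univ_four, hx, hq, hf, ptime, h0, h1, h2, h3]
    nlinarith [hs1, hs']
  · refine ⟨0, by simp [hx, h0], ?_⟩
    simp [load_eq, Fin.sum_univ_four, hx, hq, hf, ptime, h0, h1, h2, h3]
    nlinarith [hs1, hs']

lemma makespan_nonneg (s : ℝ) (hs0 : 0 ≤ s) (q : Fin 4 → ℝ) (hq : ∀ j, 0 ≤ q j)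
    (f : Fin 4 → Fin 2) (y : Fin 4 → Fin 2) : 0 ≤ makespan s q f y := by
  refine le_trans ?_ (le_max_left _ _)
  apply Finset.sum_nonneg
  intro j _
  unfold ptime
  split <;> [exact hq j; exact mul_nonneg hs0 (hq j)]

theorem spoa_lower_interval5
    (s₄ : ℝ) (hs₄lo : 1 < s₄) (hs₄hi : s₄ < 2)
    (hs₄root : s₄^4 - 2*s₄^3 + 2*s₄^2 - 4*s₄ + 1 = 0)
    (s : ℝ) (hs : s₄ ≤ s) (hs' : s ≤ 2)
    (q : Fin 4 → ℝ) (hq : q = ![1/2, 1/2, 1/2, (2 - s)/2])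
    (f : Fin 4 → Fin 2) (hf : f = ![1, 0, 0, 1])
    (x : Fin 4 → Fin 2) (hx : x = ![0, 1, 0, 1]) :
    IsSE s q f x ∧
      makespan s q f x = (s + 1)/2 ∧
      optMakespan s q f ≤ 1 ∧
      ((s + 1)/2) * optMakespan s q f ≤ makespan s q f x := by
  have hs1 : (1:ℝ) ≤ s := le_of_lt (lt_of_lt_of_le hs₄lo hs)
  have hmx : makespan s q f x = (s + 1)/2 := by
    have l0 : load s q f x 0 = (s + 1)/2 := by
      simp [load_eq, Fin.sum_univ_four, hx, hq, hf, ptime]; ring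
    have l1 : load s q f x 1 = 1 := by
      simp [load_eq, Fin.sum_univ_four, hx, hq, hf, ptime]; ring
    rw [makespan, l0, l1, max_eq_left (by linarith)]
  have hq0 : ∀ j, 0 ≤ q j := by
    intro j; fin_cases j <;> simp [hq] <;> linarith
  have hopt : optMakespan s q f ≤ 1 := by
    have key : makespan s q f ![1, 0, 0, 1] ≤ 1 := by
      have l0 : load s q f ![1, 0, 0, 1] 0 = 1 := by
        simp [load_eq, Fin.sum_univ_four, hq, hf, ptime]; ring
      have l1 : load s q f ![1, 0, 0, 1] 1 = (3 - s)/2 := by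
        simp [load_eq, Fin.sum_univ_four, hq, hf, ptime]; ring
      rw [makespan, l0, l1]
      apply max_le le_rfl (by linarith)
    refine le_trans (ciInf_le ⟨0, ?_⟩ ![1, 0, 0, 1]) key
    rintro a ⟨z, rfl⟩
    exact makespan_nonneg s (by linarith) q hq0 f z
  refine ⟨fun y hy => se_aux s hs1 hs' q hq f hf x hx y hy, hmx, hopt, ?_⟩
  rw [hmx]
  calc ((s + 1)/2) * optMakespan s q f ≤ ((s + 1)/2) * 1 :=
        mul_le_mul_of_nonneg_left hopt (by linarith)
    _ = (s + 1)/2 := by ring
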